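/- Let {A_ξ : ξ < κ} be an almost disjoint family of infinite subsets of ℕ. Then the map sending the unit vector 1_{{ξ}} of c₀(κ) to the element [1_{A_ξ}] of ℓ∞/c₀ extends (uniquely, by linearity and density) to a linear isometric embedding T : c₀(κ) → ℓ∞/c₀; in particular, the closed linear span of {[1_{A_ξ}] : ξ < κ} in ℓ∞/c₀ is isometric to c₀(κ). -/

import Mathlib

set_option synthInstance.maxHeartbeats 400000
set_option maxHeartbeats 1000000

noncomputable section

open Set Filter
open scoped ENNReal

/-- The Banach space `ℓ∞` of bounded real sequences with the sup norm. -/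
abbrev Linf : Type := ↥(lp (fun _ : ℕ => ℝ) ∞)

/-- For `y ∈ ℓ∞` and `A ⊆ ℕ`, the truncation `y_A`, equal to `y` on `A` and `0` elsewhere. -/
def truncSeq (A : Set ℕ) (y : Linf) : Linf :=
  ⟨fun i => A.indicator (⇑y) i, memℓp_infty ⟨‖y‖, by
    rintro x ⟨i, rfl⟩
    by_cases h : i ∈ A
    · simpa [Set.indicator_of_mem h] using lp.norm_apply_le_norm ENNReal.top_ne_zero y i
    · simp [Set.indicator_of_notMem h]⟩⟩

/-- The closed subspace `c₀ ⊆ ℓ∞` of sequences converging to `0`. -/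
def c0 : Submodule ℝ Linf where
  carrier := {f | Tendsto (fun n => f n) atTop (nhds 0)}
  add_mem' := by
    intro f g hf hg
    have := hf.add hg
    simpa [lp.coeFn_add] using this
  zero_mem' := by
    simpa [lp.coeFn_zero] using
      (tendsto_const_nhds : Tendsto (fun _ : ℕ => (0 : ℝ)) atTop (nhds 0))
  smul_mem' := by
    intro c f hf
    have := hf.const_smul c
    simpa [lp.coeFn_smul] using this

/-- The quotient map `π : ℓ∞ → ℓ∞/c₀`. -/
def quotMap : Linf →ₗ[ℝ] Linf ⧸ c0 := c0.mkQ

/-- `c₀(κ)`: the space of real functions on `κ` vanishing at infinity, with sup norm,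
realized as a subspace of `ℓ∞(κ)`. -/
def c0K (κ : Type*) : Submodule ℝ ↥(lp (fun _ : κ => ℝ) ∞) where
  carrier := {f | Tendsto (fun i => f i) Filter.cofinite (nhds 0)}
  add_mem' := by
    intro f g hf hg
    have := hf.add hg
    simpa [lp.coeFn_add] using this
  zero_mem' := by
    simpa [lp.coeFn_zero] using
      (tendsto_const_nhds : Tendsto (fun _ : _ => (0 : ℝ)) Filter.cofinite (nhds 0))
  smul_mem' := by
    intro c f hf
    have := hf.const_smul c
    simpa [lp.coeFn_smul] using this

/-- The unit vector `1_{{ξ}}` of `c₀(κ)`. -/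
def unitVec0 {κ : Type*} (ξ : κ) : ↥(c0K κ) :=
  ⟨⟨({ξ} : Set κ).indicator (fun _ => (1 : ℝ)), memℓp_infty ⟨1, by
      rintro x ⟨i, rfl⟩
      by_cases h : i ∈ ({ξ} : Set κ)
      · simp [Set.indicator_of_mem h]
      · simp [Set.indicator_of_notMem h]⟩⟩, by
    have hev : ∀ᶠ i in Filter.cofinite,
        (({ξ} : Set κ).indicator (fun _ => (1 : ℝ))) i = 0 := by
      apply Set.Finite.eventually_cofinite_notMem (Set.finite_singleton ξ) |>.mono
      intro i hi
      exact Set.indicator_of_notMem hi _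
    show Tendsto _ Filter.cofinite (nhds 0)
    exact Filter.Tendsto.congr' (hev.mono fun i hi => hi.symm) tendsto_const_nhds⟩

/-- The indicator `1_A ∈ ℓ∞` of `A ⊆ ℕ`. -/
def indLinf (A : Set ℕ) : Linf :=
  ⟨A.indicator (fun _ => (1 : ℝ)), memℓp_infty ⟨1, by
    rintro x ⟨i, rfl⟩
    by_cases h : i ∈ A
    · simp [Set.indicator_of_mem h]
    · simp [Set.indicator_of_notMem h]⟩⟩

/-! ### Auxiliary material for the proof -/

section AuxProof

/-- `c₀` is closed in `ℓ∞`. -/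
instance c0_isClosed : IsClosed ((c0 : Submodule ℝ Linf) : Set Linf) := by
  refine isClosed_of_closure_subset ?_
  intro x hx
  show Tendsto (fun n => x n) atTop (nhds 0)
  rw [Metric.tendsto_atTop]
  intro ε hε
  obtain ⟨g, hg, hdist⟩ := Metric.mem_closure_iff.mp hx (ε / 2) (by linarith)
  have hgt : Tendsto (fun n => (g : Linf) n) atTop (nhds 0) := hg
  rw [Metric.tendsto_atTop] at hgt
  obtain ⟨N, hN⟩ := hgt (ε / 2) (by linarith)
  refine ⟨N, fun n hn => ?_⟩
  have h1 : ‖(x - g) n‖ ≤ ‖x - g‖ := lp.norm_apply_le_norm ENNReal.top_ne_zero _ n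
  have h2 : (x - g) n = x n - g n := by rw [lp.coeFn_sub]; rfl
  have h3 : ‖x n‖ ≤ ‖x n - g n‖ + ‖g n‖ := by
    calc ‖x n‖ = ‖(x n - g n) + g n‖ := by ring_nf
    _ ≤ ‖x n - g n‖ + ‖g n‖ := norm_add_le _ _
  have h4 : ‖g n‖ < ε / 2 := by simpa [dist_eq_norm] using hN n hn
  have h5 : ‖x - g‖ < ε / 2 := by simpa [dist_eq_norm] using hdist
  rw [h2] at h1
  simp only [dist_eq_norm, sub_zero]
  linarith

variable {κ : Type*}

/-- The embedding of finitely supported functions into `c₀(κ)`. -/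
def iotaC0K : (κ →₀ ℝ) →ₗ[ℝ] ↥(c0K κ) := Finsupp.linearCombination ℝ unitVec0

lemma iotaC0K_apply (f : κ →₀ ℝ) (i : κ) :
    ((iotaC0K f : lp (fun _ : κ => ℝ) ∞) : κ → ℝ) i = f i := by
  induction f using Finsupp.induction_linear with
  | zero => simp [iotaC0K]
  | add f g hf hg =>
    rw [map_add]
    have : ((iotaC0K f + iotaC0K g : ↥(c0K κ)) : lp (fun _ : κ => ℝ) ∞)
        = (iotaC0K f : lp (fun _ : κ => ℝ) ∞) + (iotaC0K g : lp (fun _ : κ => ℝ) ∞) := rfl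
    rw [this, lp.coeFn_add]
    simp [hf, hg]
  | single ξ c =>
    rw [iotaC0K, Finsupp.linearCombination_single]
    have : ((c • unitVec0 ξ : ↥(c0K κ)) : lp (fun _ : κ => ℝ) ∞)
        = c • ((unitVec0 ξ : ↥(c0K κ)) : lp (fun _ : κ => ℝ) ∞) := rfl
    rw [this, lp.coeFn_smul]
    by_cases h : i = ξ
    · subst h
      simp [unitVec0, Finsupp.single_apply]
    · simp [unitVec0, Finsupp.single_apply, Set.indicator, Ne.symm h, h]

lemma iotaC0K_injective : Function.Injective (iotaC0K (κ := κ)) := by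
  intro f g h
  ext i
  rw [← iotaC0K_apply f i, ← iotaC0K_apply g i, h]

variable (A : κ → Set ℕ)

/-- The representative `∑ f ξ • 1_{A ξ}` of the image of a finitely supported `f`. -/
def xrep (f : κ →₀ ℝ) : Linf := ∑ ξ ∈ f.support, f ξ • indLinf (A ξ)

lemma xrep_apply (f : κ →₀ ℝ) (n : ℕ) :
    (xrep A f) n = ∑ ξ ∈ f.support, f ξ * (A ξ).indicator (fun _ => (1 : ℝ)) n := by
  rw [xrep, lp.coeFn_sum, Finset.sum_apply]
  refine Finset.sum_congr rfl fun ξ _ => ?_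
  rw [lp.coeFn_smul]
  rfl

-- The finite "bad set" of coordinates lying in two distinct sets of the family.
open scoped Classical in
def Nset (f : κ →₀ ℝ) : Set ℕ :=
  ⋃ p ∈ ((f.support ×ˢ f.support : Finset (κ × κ)) : Set (κ × κ)),
    (if p.1 = p.2 then (∅ : Set ℕ) else A p.1 ∩ A p.2)

lemma Nset_finite (hAD : ∀ ξ η, ξ ≠ η → (A ξ ∩ A η).Finite) (f : κ →₀ ℝ) :
    (Nset A f).Finite := by
  refine Set.Finite.biUnion (Finset.finite_toSet _) fun p _ => ?_
  split_ifs with h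
  · exact Set.finite_empty
  · exact hAD p.1 p.2 h

lemma not_mem_Nset {f : κ →₀ ℝ} {n : ℕ} (hn : n ∉ Nset A f) {ξ η : κ}
    (hξ : ξ ∈ f.support) (hη : η ∈ f.support) (hne : ξ ≠ η) (h1 : n ∈ A ξ) :
    n ∉ A η := by
  intro h2
  apply hn
  refine Set.mem_biUnion (x := ((ξ, η) : κ × κ)) ?_ ?_
  · exact_mod_cast Finset.mem_product.mpr ⟨hξ, hη⟩
  · rw [if_neg hne]; exact ⟨h1, h2⟩

lemma xrep_eq_of_mem {f : κ →₀ ℝ} {n : ℕ} (hn : n ∉ Nset A f) {ξ : κ}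
    (hξ : ξ ∈ f.support) (hnA : n ∈ A ξ) : (xrep A f) n = f ξ := by
  rw [xrep_apply]
  rw [Finset.sum_eq_single ξ]
  · rw [Set.indicator_of_mem hnA]; ring
  · intro η hη hne
    rw [Set.indicator_of_notMem (not_mem_Nset A hn hξ hη (Ne.symm hne) hnA)]
    ring
  · intro h; exact absurd hξ h

lemma xrep_eq_zero {f : κ →₀ ℝ} {n : ℕ} (h : ∀ ξ ∈ f.support, n ∉ A ξ) :
    (xrep A f) n = 0 := by
  rw [xrep_apply]
  refine Finset.sum_eq_zero fun ξ hξ => ?_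
  rw [Set.indicator_of_notMem (h ξ hξ)]
  ring

/-- The truncation of `xrep` to the bad set lies in `c₀`. -/
lemma trunc_mem_c0 (hAD : ∀ ξ η, ξ ≠ η → (A ξ ∩ A η).Finite) (f : κ →₀ ℝ) :
    truncSeq (Nset A f) (xrep A f) ∈ c0 := by
  show Tendsto (fun n => (truncSeq (Nset A f) (xrep A f)) n) atTop (nhds 0)
  have hev : ∀ᶠ n in Filter.cofinite, n ∉ Nset A f :=
    (Nset_finite A hAD f).eventually_cofinite_notMem
  rw [← Nat.cofinite_eq_atTop]
  refine Filter.Tendsto.congr' (hev.mono fun n hn => ?_) tendsto_const_nhds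
  show (0 : ℝ) = (Nset A f).indicator (⇑(xrep A f)) n
  rw [Set.indicator_of_notMem hn]

/-- A convenient form of the quotient-norm characterization. -/
lemma quot_norm_lt {x : Linf} {r : ℝ}
    (h : ‖(Submodule.Quotient.mk x : Linf ⧸ c0)‖ < r) :
    ∃ m : Linf, (Submodule.Quotient.mk m : Linf ⧸ c0) = Submodule.Quotient.mk x ∧ ‖m‖ < r := by
  obtain ⟨m, hm, hm2⟩ := QuotientAddGroup.norm_lt_iff (S := c0.toAddSubgroup).mp h
  exact ⟨m, hm, hm2⟩

/-- The key norm identity: `‖[∑ f ξ • 1_{A ξ}]‖ = ‖f‖∞`. -/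
lemma norm_mk_xrep (hAinf : ∀ ξ, (A ξ).Infinite)
    (hAD : ∀ ξ η, ξ ≠ η → (A ξ ∩ A η).Finite) (f : κ →₀ ℝ) :
    ‖(Submodule.Quotient.mk (xrep A f) : Linf ⧸ c0)‖ = ‖iotaC0K f‖ := by
  refine le_antisymm ?_ ?_
  · -- upper bound
    set g : Linf := truncSeq (Nset A f) (xrep A f) with hgdef
    have hg : g ∈ c0 := trunc_mem_c0 A hAD f
    have hmk : (Submodule.Quotient.mk (xrep A f) : Linf ⧸ c0)
        = Submodule.Quotient.mk (xrep A f - g) := by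
      rw [Submodule.Quotient.mk_sub]
      rw [(Submodule.Quotient.mk_eq_zero c0).mpr hg, sub_zero]
    rw [hmk]
    refine le_trans (Submodule.Quotient.norm_mk_le c0 _) ?_
    refine lp.norm_le_of_forall_le (norm_nonneg _) fun n => ?_
    have hsub : (xrep A f - g) n = (xrep A f) n - g n := by rw [lp.coeFn_sub]; rfl
    have hgn : g n = (Nset A f).indicator (⇑(xrep A f)) n := rfl
    by_cases hn : n ∈ Nset A f
    · rw [hsub, hgn, Set.indicator_of_mem hn, sub_self, norm_zero]
      exact norm_nonneg _
    · rw [hsub, hgn, Set.indicator_of_notMem hn, sub_zero]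
      by_cases hex : ∃ ξ ∈ f.support, n ∈ A ξ
      · obtain ⟨ξ, hξ, hnA⟩ := hex
        rw [xrep_eq_of_mem A hn hξ hnA]
        have : f ξ = ((iotaC0K f : lp (fun _ : κ => ℝ) ∞) : κ → ℝ) ξ :=
          (iotaC0K_apply f ξ).symm
        rw [this]
        exact lp.norm_apply_le_norm ENNReal.top_ne_zero _ ξ
      · push_neg at hex
        rw [xrep_eq_zero A hex, norm_zero]
        exact norm_nonneg _
  · -- lower bound
    have hnn : ‖iotaC0K f‖ = ‖((iotaC0K f : ↥(c0K κ)) : lp (fun _ : κ => ℝ) ∞)‖ := rfl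
    rw [hnn]
    refine lp.norm_le_of_forall_le (norm_nonneg _) fun ξ => ?_
    rw [show ((iotaC0K f : lp (fun _ : κ => ℝ) ∞) : κ → ℝ) ξ = f ξ from iotaC0K_apply f ξ]
    by_cases hfξ : f ξ = 0
    · rw [hfξ, norm_zero]; exact norm_nonneg _
    have hξ : ξ ∈ f.support := Finsupp.mem_support_iff.mpr hfξ
    by_contra hlt
    push_neg at hlt
    obtain ⟨m, hm, hmlt⟩ := quot_norm_lt hlt
    have hsub : xrep A f - m ∈ c0 := by
      have := (Submodule.Quotient.eq c0).mp hm.symm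
      exact this
    have ht : Tendsto (fun n => (xrep A f - m) n) atTop (nhds 0) := hsub
    rw [Metric.tendsto_atTop] at ht
    have hε : (0 : ℝ) < ‖f ξ‖ - ‖m‖ := by linarith
    obtain ⟨n₀, hn₀⟩ := ht (‖f ξ‖ - ‖m‖) hε
    have hW : (A ξ \ Nset A f).Infinite := (hAinf ξ).diff (Nset_finite A hAD f)
    obtain ⟨n, hnW, hn⟩ := hW.exists_gt n₀
    have hx : (xrep A f) n = f ξ := xrep_eq_of_mem A hnW.2 hξ hnW.1
    have h1 : ‖(xrep A f - m) n‖ < ‖f ξ‖ - ‖m‖ := by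
      simpa [dist_eq_norm] using hn₀ n (le_of_lt hn)
    have h2 : (xrep A f - m) n = (xrep A f) n - m n := by rw [lp.coeFn_sub]; rfl
    have h3 : ‖m n‖ ≤ ‖m‖ := lp.norm_apply_le_norm ENNReal.top_ne_zero m n
    have h4 : ‖f ξ‖ ≤ ‖(xrep A f) n - m n‖ + ‖m n‖ := by
      calc ‖f ξ‖ = ‖((xrep A f) n - m n) + m n‖ := by rw [← hx]; ring_nf
      _ ≤ ‖(xrep A f) n - m n‖ + ‖m n‖ := norm_add_le _ _
    rw [h2] at h1
    linarith

/-- The image of `iotaC0K` under the `Finsupp`-linear combination is `mk (xrep)`. -/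
lemma T0_eq (f : κ →₀ ℝ) :
    Finsupp.linearCombination ℝ (fun ξ => (Submodule.Quotient.mk (indLinf (A ξ)) : Linf ⧸ c0)) f
      = Submodule.Quotient.mk (xrep A f) := by
  rw [Finsupp.linearCombination_apply, Finsupp.sum, xrep]
  have hmk : (Submodule.Quotient.mk : Linf → Linf ⧸ c0) = ⇑c0.mkQ := rfl
  rw [hmk, map_sum]
  refine Finset.sum_congr rfl fun ξ _ => ?_
  rw [map_smul]

/-- Finitely supported functions are dense in `c₀(κ)`. -/
lemma dense_range_iota :
    Dense ((LinearMap.range (iotaC0K (κ := κ)) : Submodule ℝ ↥(c0K κ)) : Set ↥(c0K κ)) := by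
  classical
  intro x
  rw [Metric.mem_closure_iff]
  intro ε hε
  have hx : Tendsto (fun i => (x : lp (fun _ : κ => ℝ) ∞) i) Filter.cofinite (nhds 0) := x.2
  have hev : ∀ᶠ i in Filter.cofinite, dist ((x : lp (fun _ : κ => ℝ) ∞) i) 0 < ε / 2 :=
    (Metric.tendsto_nhds.mp hx) (ε / 2) (by linarith)
  have hfin : {i | ¬ dist ((x : lp (fun _ : κ => ℝ) ∞) i) 0 < ε / 2}.Finite :=
    Filter.eventually_cofinite.mp hev
  set F := hfin.toFinset with hF
  set g : κ →₀ ℝ := ∑ ξ ∈ F, Finsupp.single ξ ((x : lp (fun _ : κ => ℝ) ∞) ξ) with hg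
  refine ⟨iotaC0K g, ⟨g, rfl⟩, ?_⟩
  have hgi : ∀ i, g i = if i ∈ F then (x : lp (fun _ : κ => ℝ) ∞) i else 0 := by
    intro i
    rw [hg, Finset.sum_apply']
    simp_rw [Finsupp.single_apply]
    exact Finset.sum_ite_eq' F i _
  have hcoord : ∀ i, ‖((x - iotaC0K g : ↥(c0K κ)) : lp (fun _ : κ => ℝ) ∞) i‖ ≤ ε / 2 := by
    intro i
    have h1 : ((x - iotaC0K g : ↥(c0K κ)) : lp (fun _ : κ => ℝ) ∞)
        = (x : lp (fun _ : κ => ℝ) ∞) - (iotaC0K g : lp (fun _ : κ => ℝ) ∞) := rfl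
    have h2 : ((x - iotaC0K g : ↥(c0K κ)) : lp (fun _ : κ => ℝ) ∞) i
        = (x : lp (fun _ : κ => ℝ) ∞) i - ((iotaC0K g : lp (fun _ : κ => ℝ) ∞) : κ → ℝ) i := by
      rw [h1, lp.coeFn_sub]; rfl
    rw [h2, iotaC0K_apply, hgi i]
    by_cases hi : i ∈ F
    · rw [if_pos hi, sub_self, norm_zero]; linarith
    · rw [if_neg hi, sub_zero]
      have : dist ((x : lp (fun _ : κ => ℝ) ∞) i) 0 < ε / 2 := by
        by_contra hc
        exact hi (hfin.mem_toFinset.mpr hc)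
      rw [dist_eq_norm, sub_zero] at this
      linarith
  have hnorm : ‖x - iotaC0K g‖ ≤ ε / 2 := by
    have : ‖((x - iotaC0K g : ↥(c0K κ)) : lp (fun _ : κ => ℝ) ∞)‖ ≤ ε / 2 :=
      lp.norm_le_of_forall_le (by linarith) hcoord
    exact this
  rw [dist_eq_norm]
  linarith

end AuxProof

/-- for an almost disjoint family `{A_ξ : ξ < κ}`, the assignment
`1_{{ξ}} ↦ [1_{A_ξ}]` extends to a linear isometric embedding `T : c₀(κ) → ℓ∞/c₀`. -/
theorem stmt19 {κ : Type*} (A : κ → Set ℕ) (hinj : Function.Injective A)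
    (hAinf : ∀ ξ, (A ξ).Infinite)
    (hAD : ∀ ξ η, ξ ≠ η → (A ξ ∩ A η).Finite) :
    ∃ T : ↥(c0K κ) →ₗᵢ[ℝ] (Linf ⧸ c0),
      ∀ ξ : κ, T (unitVec0 ξ) = Submodule.Quotient.mk (indLinf (A ξ)) := by
  classical
  set T₀ : (κ →₀ ℝ) →ₗ[ℝ] (Linf ⧸ c0) :=
    Finsupp.linearCombination ℝ
      (fun ξ => (Submodule.Quotient.mk (indLinf (A ξ)) : Linf ⧸ c0)) with hT₀
  set p : Submodule ℝ ↥(c0K κ) := LinearMap.range (iotaC0K (κ := κ)) with hp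
  set eqv : (κ →₀ ℝ) ≃ₗ[ℝ] ↥p :=
    LinearEquiv.ofInjective (iotaC0K (κ := κ)) iotaC0K_injective with heqv
  set g : ↥p →ₗ[ℝ] (Linf ⧸ c0) := T₀ ∘ₗ (eqv.symm : ↥p ≃ₗ[ℝ] (κ →₀ ℝ)).toLinearMap with hgdef
  have hcoe_eqv : ∀ f : κ →₀ ℝ, ((eqv f : ↥p) : ↥(c0K κ)) = iotaC0K f := by
    intro f
    rw [heqv, LinearEquiv.ofInjective_apply]
  have hgapp : ∀ f : κ →₀ ℝ, g (eqv f) = T₀ f := by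
    intro f
    rw [hgdef]
    simp only [LinearMap.coe_comp, Function.comp_apply, LinearEquiv.coe_coe,
      LinearEquiv.symm_apply_apply]
  have hT₀norm : ∀ f : κ →₀ ℝ, ‖T₀ f‖ = ‖iotaC0K f‖ := by
    intro f
    rw [hT₀, T0_eq A f, norm_mk_xrep A hAinf hAD f]
  have hgnorm : ∀ y : ↥p, ‖g y‖ = ‖y‖ := by
    intro y
    obtain ⟨f, hf⟩ := eqv.surjective y
    rw [← hf, hgapp, hT₀norm]
    rw [show ‖(eqv f : ↥p)‖ = ‖((eqv f : ↥p) : ↥(c0K κ))‖ from rfl, hcoe_eqv]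
  set gC : ↥p →L[ℝ] (Linf ⧸ c0) :=
    g.mkContinuous 1 (fun y => by rw [hgnorm y, one_mul]; exact le_rfl) with hgC
  have hgCapp : ∀ y : ↥p, gC y = g y := fun y => rfl
  set e : ↥p →L[ℝ] ↥(c0K κ) := p.subtypeL with he
  have hdense : DenseRange ⇑e := by
    show Dense (Set.range ⇑e)
    have hre : Set.range ⇑e = (p : Set ↥(c0K κ)) := Subtype.range_coe
    rw [hre, hp]
    exact dense_range_iota
  have hiso : Isometry ⇑e := fun x y => rfl
  have h_e : IsUniformInducing ⇑e := hiso.isUniformInducing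
  set Text : ↥(c0K κ) →L[ℝ] (Linf ⧸ c0) := gC.extend e with hText
  have hagree : ∀ f : κ →₀ ℝ, Text (iotaC0K f) = T₀ f := by
    intro f
    have h1 : iotaC0K f = e (eqv f) := (hcoe_eqv f).symm
    rw [h1, hText, ContinuousLinearMap.extend_eq (h_dense := hdense) (h_e := h_e), hgCapp, hgapp]
  have hisom : ∀ x : ↥(c0K κ), ‖Text x‖ = ‖x‖ := by
    have hclosed : IsClosed {x : ↥(c0K κ) | ‖Text x‖ = ‖x‖} :=
      isClosed_eq Text.continuous.norm continuous_norm
    have hsub : (p : Set ↥(c0K κ)) ⊆ {x : ↥(c0K κ) | ‖Text x‖ = ‖x‖} := by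
      rintro x hx
      obtain ⟨f, rfl⟩ := hx
      show ‖Text (iotaC0K f)‖ = ‖iotaC0K f‖
      rw [hagree, hT₀norm]
    have hcl : closure (p : Set ↥(c0K κ)) ⊆ {x : ↥(c0K κ) | ‖Text x‖ = ‖x‖} :=
      hclosed.closure_subset_iff.mpr hsub
    have hde : Dense (p : Set ↥(c0K κ)) := by rw [hp]; exact dense_range_iota
    intro x
    exact hcl (hde.closure_eq ▸ Set.mem_univ x)
  refine ⟨⟨Text.toLinearMap, hisom⟩, fun ξ => ?_⟩
  have h1 : unitVec0 ξ = iotaC0K (Finsupp.single ξ (1 : ℝ)) := by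
    rw [iotaC0K, Finsupp.linearCombination_single, one_smul]
  show Text (unitVec0 ξ) = Submodule.Quotient.mk (indLinf (A ξ))
  rw [h1, hagree, hT₀, Finsupp.linearCombination_single, one_smul]
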